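/- Let n ≥ 1, and let l, r̃ ∈ ℝ and σ ∈ ℝ. On (0,∞)×ℝ×ℝ^{n−1} with coordinates (x, τ_b, μ_b), consider the symbols p(x,τ_b,μ_b) = x²(τ_b² + |μ_b|²) − 2σxτ_b and a(x,τ_b,μ_b) = x^{−2l−1}(τ_b² + |μ_b|²)^{r̃−1/2}, the latter defined for (τ_b,μ_b) ≠ 0. Then the b-Poisson bracket satisfies, at every point with (τ_b,μ_b) ≠ 0: {p, a} = x^{−2l}(τ_b² + |μ_b|²)^{r̃−3/2}·( 4σ((l+r̃)τ_b² + (l+1/2)|μ_b|²) − 4x(l+r̃)τ_b(τ_b² + |μ_b|²) ). -/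
import Mathlib


/-- The b-Poisson bracket on the b-phase space `(x, τ_b, μ_b) ∈ (0,∞) × ℝ × ℝ^{n-1}`, for
symbols independent of the boundary variables `y`:
`{f, g} = (∂_{τ_b} f)(x ∂ₓ g) − (x ∂ₓ f)(∂_{τ_b} g)`. -/
noncomputable def bBracket {m : ℕ} (f g : ℝ → ℝ → EuclideanSpace ℝ (Fin m) → ℝ)
    (x τ : ℝ) (μ : EuclideanSpace ℝ (Fin m)) : ℝ :=
  deriv (fun t => f x t μ) τ * (x * deriv (fun s => g s τ μ) x)
    - (x * deriv (fun s => f s τ μ) x) * deriv (fun t => g x t μ) τ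

/-- Lemma 4.2 of the paper (the main commutator computation): with
`p = x²(τ_b² + |μ_b|²) − 2σxτ_b` and `a = x^{−2l−1}(τ_b² + |μ_b|²)^{r̃−1/2}`, at every point
with `(τ_b, μ_b) ≠ 0`,
`{p, a} = x^{−2l}(τ_b²+|μ_b|²)^{r̃−3/2}(4σ((l+r̃)τ_b² + (l+1/2)|μ_b|²)
           − 4x(l+r̃)τ_b(τ_b²+|μ_b|²))`. -/
theorem commutator_symbol_real (n : ℕ) (hn : 1 ≤ n) (l r σ : ℝ)
    (x τb : ℝ) (hx : 0 < x) (μb : EuclideanSpace ℝ (Fin (n - 1)))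
    (hne : (τb, μb) ≠ 0) :
    bBracket
        (fun x τ μ => x ^ 2 * (τ ^ 2 + ‖μ‖ ^ 2) - 2 * σ * x * τ)
        (fun x τ μ => x ^ (-2 * l - 1) * (τ ^ 2 + ‖μ‖ ^ 2) ^ (r - 1 / 2))
        x τb μb
      = x ^ (-2 * l) * (τb ^ 2 + ‖μb‖ ^ 2) ^ (r - 3 / 2) *
          (4 * σ * ((l + r) * τb ^ 2 + (l + 1 / 2) * ‖μb‖ ^ 2)
            - 4 * x * (l + r) * τb * (τb ^ 2 + ‖μb‖ ^ 2)) := by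
  set c : ℝ := ‖μb‖ ^ 2 with hc
  have hq : 0 < τb ^ 2 + c := by
    rcases eq_or_ne τb 0 with h | h
    · have hμ : μb ≠ 0 := by
        intro hm; exact hne (by simp [h, hm, Prod.ext_iff])
      have : 0 < ‖μb‖ := norm_pos_iff.mpr hμ
      have : 0 < c := by rw [hc]; positivity
      nlinarith [sq_nonneg τb]
    · have h2 : 0 < τb ^ 2 := by positivity
      have : 0 ≤ c := by rw [hc]; positivity
      linarith
  -- derivative of p in τ
  have d1 : HasDerivAt (fun t : ℝ => x ^ 2 * (t ^ 2 + c) - 2 * σ * x * t)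
      (x ^ 2 * (2 * τb) - 2 * σ * x) τb := by
    have h1 : HasDerivAt (fun t : ℝ => t ^ 2 + c) (2 * τb) τb := by
      simpa using ((hasDerivAt_pow 2 τb).add_const c)
    have h2 : HasDerivAt (fun t : ℝ => 2 * σ * x * t) (2 * σ * x) τb := by
      simpa using (hasDerivAt_id τb).const_mul (2 * σ * x)
    exact (h1.const_mul (x ^ 2)).sub h2
  -- derivative of p in x
  have d2 : HasDerivAt (fun s : ℝ => s ^ 2 * (τb ^ 2 + c) - 2 * σ * s * τb)
      (2 * x * (τb ^ 2 + c) - 2 * σ * τb) x := by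
    have h1 : HasDerivAt (fun s : ℝ => s ^ 2 * (τb ^ 2 + c))
        (2 * x * (τb ^ 2 + c)) x := by
      simpa using (hasDerivAt_pow 2 x).mul_const (τb ^ 2 + c)
    have h2 : HasDerivAt (fun s : ℝ => 2 * σ * s * τb) (2 * σ * τb) x := by
      have := ((hasDerivAt_id x).const_mul (2 * σ)).mul_const τb
      simpa [mul_comm, mul_assoc] using this
    exact h1.sub h2
  -- derivative of a in τ
  have d3 : HasDerivAt (fun t : ℝ => x ^ (-2 * l - 1) * (t ^ 2 + c) ^ (r - 1 / 2))
      (x ^ (-2 * l - 1) * (2 * τb * (r - 1 / 2) * (τb ^ 2 + c) ^ (r - 1 / 2 - 1))) τb := by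
    have h1 : HasDerivAt (fun t : ℝ => t ^ 2 + c) (2 * τb) τb := by
      simpa using ((hasDerivAt_pow 2 τb).add_const c)
    have h2 := h1.rpow_const (p := r - 1 / 2) (Or.inl hq.ne')
    exact h2.const_mul _
  -- derivative of a in x
  have d4 : HasDerivAt (fun s : ℝ => s ^ (-2 * l - 1) * (τb ^ 2 + c) ^ (r - 1 / 2))
      ((-2 * l - 1) * x ^ (-2 * l - 1 - 1) * (τb ^ 2 + c) ^ (r - 1 / 2)) x := by
    exact (Real.hasDerivAt_rpow_const (Or.inl hx.ne')).mul_const _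
  rw [bBracket, d1.deriv, d2.deriv, d3.deriv, d4.deriv]
  have e1 : x ^ (-2 * l - 1 - 1) = x ^ (-2 * l) / x / x := by
    rw [show (-2 * l - 1 - 1 : ℝ) = -2 * l - (1 + 1) by ring, Real.rpow_sub hx,
      Real.rpow_add hx, Real.rpow_one]
    ring
  have e2 : x ^ (-2 * l - 1) = x ^ (-2 * l) / x := by
    rw [Real.rpow_sub hx, Real.rpow_one]
  have e3 : (τb ^ 2 + c) ^ (r - 1 / 2) = (τb ^ 2 + c) ^ (r - 3 / 2) * (τb ^ 2 + c) := by
    rw [show (r - 1 / 2 : ℝ) = (r - 3 / 2) + 1 by ring, Real.rpow_add hq, Real.rpow_one]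
  have e4 : (r - 1 / 2 - 1 : ℝ) = r - 3 / 2 := by ring
  rw [e1, e2, e3, e4]
  field_simp
  ring
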